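/- (Theorem 4, lower bound for a chain with absorption in zero.) In the absorbing-state setting, let D = diag(d_1,…,d_S) with positive entries, set α_k(t) = ∑_{j=0, j≠k}^{S} q_{kj}(t) − ∑_{i=1, i≠k}^{S} (d_i/d_k) q_{ki}(t) for 1 ≤ k ≤ S, and β_*(t) = max_{1≤k≤S} α_k(t). Let z*, z** : [0,∞) → ℝ^S be differentiable with z'(t) = B(t)z(t) for all t ≥ 0. If z*(0) − z**(0) ≥ 0 componentwise, then ‖D(z*(t) − z**(t))‖₁ ≥ exp(−∫₀ᵗ β_*(τ) dτ) · ‖D(z*(0) − z**(0))‖₁ for all t ≥ 0. -/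

import Mathlib

open Set

section auxiliary
open Real Filter Topology

lemma max_sub_max_le' (a b : ℝ) : max a 0 - max b 0 ≤ max (a - b) 0 := by
  have h1 : a ≤ max (a-b) 0 + max b 0 := by
    calc a = (a - b) + b := by ring
    _ ≤ max (a-b) 0 + max b 0 := add_le_add (le_max_left _ _) (le_max_left _ _)
  have h2 : (0:ℝ) ≤ max (a-b) 0 + max b 0 :=
    add_nonneg (le_max_right _ _) (le_max_right _ _)
  have := max_le h1 h2
  linarith

lemma pos_preserved' {n : ℕ} (A : ℝ → Matrix (Fin n) (Fin n) ℝ) (T : ℝ)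
    (hAc : ∀ i j, ContinuousOn (fun t => A t i j) (Ici 0))
    (hoff : ∀ t ∈ Icc (0:ℝ) T, ∀ i j, i ≠ j → 0 ≤ A t i j)
    (w : ℝ → Fin n → ℝ)
    (hw : ∀ t ∈ Ici (0:ℝ), ∀ i, HasDerivWithinAt (fun s => w s i) ((A t).mulVec (w t) i) (Ici 0) t)
    (h0 : ∀ i, 0 ≤ w 0 i) : ∀ t ∈ Icc (0:ℝ) T, ∀ i, 0 ≤ w t i := by
  obtain ⟨C, hC⟩ := (isCompact_Icc : IsCompact (Icc (0:ℝ) T)).exists_bound_of_continuousOn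
    (f := fun t => ∑ i, ∑ j, |A t i j|) (by
      apply continuousOn_finset_sum _ (fun i _ => ?_)
      exact continuousOn_finset_sum _ (fun j _ => ((hAc i j).mono (Icc_subset_Ici_self)).abs))
  set C₀ := max C 0 with hC₀
  have hC₀nn : (0:ℝ) ≤ C₀ := le_max_right _ _
  have hCbd : ∀ t ∈ Icc (0:ℝ) T, ∑ i, ∑ j, |A t i j| ≤ C₀ := by
    intro t ht
    calc ∑ i, ∑ j, |A t i j| ≤ ‖∑ i, ∑ j, |A t i j|‖ := le_abs_self _
    _ ≤ C := hC t ht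
    _ ≤ C₀ := le_max_left _ _
  set K := 2 * C₀ with hK
  set y : ℝ → Fin n → ℝ := fun t i => exp (C₀ * t) * w t i with hy
  set M : ℝ → Matrix (Fin n) (Fin n) ℝ :=
    fun t i j => A t i j + if i = j then C₀ else 0 with hM
  set y' : ℝ → Fin n → ℝ := fun t i => ∑ j, M t i j * y t j with hy'def
  have habs_le : ∀ t ∈ Icc (0:ℝ) T, ∀ i j, |A t i j| ≤ C₀ := by
    intro t ht i j
    refine le_trans ?_ (hCbd t ht)
    calc |A t i j| ≤ ∑ j', |A t i j'| :=
      Finset.single_le_sum (f := fun j' => |A t i j'|) (fun j' _ => abs_nonneg _) (Finset.mem_univ j)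
    _ ≤ ∑ i', ∑ j', |A t i' j'| :=
      Finset.single_le_sum (f := fun i' => ∑ j', |A t i' j'|)
        (fun i' _ => Finset.sum_nonneg fun _ _ => abs_nonneg _) (Finset.mem_univ i)
  have hyid : ∀ t i, y' t i = exp (C₀*t) * C₀ * w t i + exp (C₀*t) * (A t).mulVec (w t) i := by
    intro t i
    have h1 : (∑ j, A t i j * y t j) = exp (C₀*t) * (A t).mulVec (w t) i := by
      simp only [hy, Matrix.mulVec, dotProduct, Finset.mul_sum]
      exact Finset.sum_congr rfl fun j _ => by ring
    have h2 : (∑ j, (if i = j then C₀ else 0) * y t j) = exp (C₀*t) * C₀ * w t i := by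
      simp only [ite_mul, zero_mul, Finset.sum_ite_eq, Finset.mem_univ, if_true, hy]
      ring
    calc y' t i = ∑ j, (A t i j * y t j + (if i = j then C₀ else 0) * y t j) := by
          simp only [hy'def, hM, add_mul]
    _ = _ := by rw [Finset.sum_add_distrib, h1, h2]; ring
  have hy' : ∀ t ∈ Ici (0:ℝ), ∀ i,
      HasDerivWithinAt (fun s => y s i) (y' t i) (Ici 0) t := by
    intro t ht i
    rw [hyid]
    have he : HasDerivAt (fun s : ℝ => exp (C₀ * s)) (exp (C₀ * t) * (C₀ * 1)) t :=
      ((hasDerivAt_id t).const_mul C₀).exp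
    have := he.hasDerivWithinAt.fun_mul (hw t ht i)
    simpa [mul_one] using this
  have hMnn : ∀ t ∈ Icc (0:ℝ) T, ∀ i j, 0 ≤ M t i j := by
    intro t ht i j
    by_cases h : i = j
    · subst h
      simp only [hM, if_true]
      have := habs_le t ht i i
      have := neg_abs_le (A t i i)
      linarith
    · simpa [hM, h] using hoff t ht i j h
  have hMcol : ∀ t ∈ Icc (0:ℝ) T, ∀ j, ∑ i, M t i j ≤ K := by
    intro t ht j
    have h1 : ∑ i, M t i j = (∑ i, A t i j) + C₀ := by
      simp [hM, Finset.sum_add_distrib]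
    have h2 : (∑ i, A t i j) ≤ C₀ := by
      calc (∑ i, A t i j) ≤ ∑ i, |A t i j| :=
        Finset.sum_le_sum fun i _ => le_abs_self _
      _ ≤ ∑ i, ∑ j', |A t i j'| := Finset.sum_le_sum fun i _ =>
        Finset.single_le_sum (f := fun j' => |A t i j'|) (fun j' _ => abs_nonneg _) (Finset.mem_univ j)
      _ ≤ C₀ := hCbd t ht
    rw [h1, hK]; linarith
  set φ : ℝ → ℝ := fun t => ∑ i, max (-(y t i)) 0 with hφ
  have hφnn : ∀ t, 0 ≤ φ t := fun t => Finset.sum_nonneg fun i _ => le_max_right _ _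
  have hφcont : ContinuousOn φ (Icc 0 T) := by
    apply continuousOn_finset_sum _ (fun i _ => ?_)
    have hyc : ContinuousOn (fun s => y s i) (Icc 0 T) := by
      intro s hs
      exact ((hy' s (hs.1) i).continuousWithinAt).mono Icc_subset_Ici_self
    exact hyc.neg.sup continuousOn_const
  have key : ∀ x ∈ Ico (0:ℝ) T, ∀ r, K * φ x < r →
      ∃ᶠ z in 𝓝[>] x, (z - x)⁻¹ * (φ z - φ x) < r := by
    intro x hx r hr
    have hxT : x ∈ Icc (0:ℝ) T := ⟨hx.1, le_of_lt hx.2⟩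
    have hL : (∑ i, max (-(y' x i)) 0) ≤ K * φ x := by
      have step : ∀ i, max (-(y' x i)) 0 ≤ ∑ j, M x i j * max (-(y x j)) 0 := by
        intro i
        apply max_le _ (Finset.sum_nonneg fun j _ =>
          mul_nonneg (hMnn x hxT i j) (le_max_right _ _))
        have : -(y' x i) = ∑ j, M x i j * (-(y x j)) := by
          simp [hy'def, Finset.sum_neg_distrib, mul_neg]
        rw [this]
        exact Finset.sum_le_sum fun j _ =>
          mul_le_mul_of_nonneg_left (le_max_left _ _) (hMnn x hxT i j)
      calc (∑ i, max (-(y' x i)) 0) ≤ ∑ i, ∑ j, M x i j * max (-(y x j)) 0 :=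
        Finset.sum_le_sum fun i _ => step i
      _ = ∑ j, (∑ i, M x i j) * max (-(y x j)) 0 := by
        rw [Finset.sum_comm]
        exact Finset.sum_congr rfl fun j _ => (Finset.sum_mul _ _ _).symm
      _ ≤ ∑ j, K * max (-(y x j)) 0 := Finset.sum_le_sum fun j _ =>
        mul_le_mul_of_nonneg_right (hMcol x hxT j) (le_max_right _ _)
      _ = K * φ x := by rw [hφ, Finset.mul_sum]
    have hslope : ∀ i, Tendsto (fun z => (y z i - y x i) / (z - x)) (𝓝[>] x)
        (𝓝 (y' x i)) := by
      intro i
      have h := (hasDerivWithinAt_iff_tendsto_slope).1 (hy' x hx.1 i)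
      have hsub : Ioi x ⊆ Ici (0:ℝ) \ {x} := fun z hz =>
        ⟨le_trans hx.1 (le_of_lt hz), ne_of_gt hz⟩
      have := h.mono_left (nhdsWithin_mono x hsub)
      simpa only [slope_fun_def_field, div_eq_inv_mul] using this
    have htend : Tendsto (fun z => ∑ i, max (-((y z i - y x i) / (z - x))) 0) (𝓝[>] x)
        (𝓝 (∑ i, max (-(y' x i)) 0)) :=
      tendsto_finset_sum _ fun i _ => ((hslope i).neg).max tendsto_const_nhds
    have hev : ∀ᶠ z in 𝓝[>] x, (∑ i, max (-((y z i - y x i) / (z - x))) 0) < r :=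
      htend.eventually_lt_const (lt_of_le_of_lt hL hr)
    refine ((hev.and self_mem_nhdsWithin).mono ?_).frequently
    rintro z ⟨h1, (h2 : x < z)⟩
    refine lt_of_le_of_lt ?_ h1
    have hzx : (0:ℝ) < z - x := by linarith
    calc (z - x)⁻¹ * (φ z - φ x)
        = ∑ i, (z - x)⁻¹ * (max (-(y z i)) 0 - max (-(y x i)) 0) := by
          rw [hφ, ← Finset.sum_sub_distrib, Finset.mul_sum]
    _ ≤ ∑ i, max (-((y z i - y x i) / (z - x))) 0 := by
        apply Finset.sum_le_sum
        intro i _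
        have h3 : max (-(y z i)) 0 - max (-(y x i)) 0 ≤ max (-(y z i) - -(y x i)) 0 :=
          max_sub_max_le' _ _
        have h4 : (z - x)⁻¹ * (max (-(y z i)) 0 - max (-(y x i)) 0)
            ≤ (z - x)⁻¹ * max (-(y z i) - -(y x i)) 0 :=
          mul_le_mul_of_nonneg_left h3 (le_of_lt (inv_pos.2 hzx))
        refine le_trans h4 (le_of_eq ?_)
        rw [mul_max_of_nonneg _ _ (le_of_lt (inv_pos.2 hzx)), mul_zero]
        congr 1
        field_simp
        ring
    _ = _ := rfl
  have hφ0 : φ 0 ≤ 0 := by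
    apply le_of_eq
    rw [hφ]
    apply Finset.sum_eq_zero
    intro i _
    apply max_eq_right
    simp only [hy, Left.neg_nonpos_iff]
    exact mul_nonneg (le_of_lt (exp_pos _)) (h0 i)
  have hgron := le_gronwallBound_of_liminf_deriv_right_le (f := φ) (f' := fun x => K * φ x)
    (δ := 0) (K := K) (ε := 0) hφcont key hφ0 (fun x _ => le_of_eq (add_zero (K * φ x)).symm)
  intro t ht i
  have hφt : φ t ≤ 0 := by
    have := hgron t ht
    rwa [gronwallBound_ε0_δ0] at this
  have hterm : max (-(y t i)) 0 = 0 := by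
    have hsum0 : φ t = 0 := le_antisymm hφt (hφnn t)
    rw [hφ] at hsum0
    exact (Finset.sum_eq_zero_iff_of_nonneg (fun j _ => le_max_right _ _)).1 hsum0 i
      (Finset.mem_univ i)
  have hyge : 0 ≤ y t i := by
    by_contra h
    push_neg at h
    have : max (-(y t i)) 0 > 0 := lt_max_iff.2 (Or.inl (by linarith))
    linarith
  rw [hy] at hyge
  exact nonneg_of_mul_nonneg_right hyge (exp_pos _)

lemma sum_Icc_eq_fin' (S : ℕ) (f : ℕ → ℝ) :
    ∑ i ∈ Finset.Icc 1 S, f i = ∑ i : Fin S, f ((i : ℕ) + 1) := by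
  rw [Fin.sum_univ_eq_sum_range (fun i => f (i + 1))]
  rw [← Finset.Ico_add_one_right_eq_Icc, Finset.sum_Ico_eq_sum_range]
  simp [add_comm]

end auxiliary


/-- The reduced matrix `B(t)` of a Markov chain on `{0,…,S}` with transition
intensities `q_{ij}(t)`: `B_{ij} = q_{ji}` for `i ≠ j` and
`B_{ii} = −∑_{j≠i} q_{ij}` (1-based indices `1,…,S` encoded by
`i : Fin S ↦ i+1`). -/
def absB (S : ℕ) (q : ℕ → ℕ → ℝ → ℝ) (t : ℝ) : Matrix (Fin S) (Fin S) ℝ :=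
  fun i j =>
    if i = j then -∑ k ∈ (Finset.range (S + 1)).erase ((i : ℕ) + 1), q ((i : ℕ) + 1) k t
    else q ((j : ℕ) + 1) ((i : ℕ) + 1) t

/-- Theorem 4 (lower bound) for a Markov chain with absorption in zero: with
`α_k = ∑_{j≠k} q_{kj} − ∑_{i≠k} (dᵢ/dₖ) q_{ki}` and `β₋ = max_k α_k`, if
`z*(0) − z**(0) ≥ 0` componentwise then
`‖D(z*(t) − z**(t))‖₁ ≥ exp(−∫₀ᵗ β₋) ‖D(z*(0) − z**(0))‖₁`. -/
theorem absorbing_lower_bound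
    (S : ℕ) (hS : 1 ≤ S)
    (q : ℕ → ℕ → ℝ → ℝ) (d : ℕ → ℝ)
    (hq : ∀ i j, i ≤ S → j ≤ S → i ≠ j →
      ContinuousOn (q i j) (Ici 0) ∧ ∀ t ∈ Ici (0 : ℝ), 0 ≤ q i j t)
    (habs : ∀ j, 1 ≤ j → ∀ t, q 0 j t = 0)
    (hd : ∀ k, 1 ≤ k → k ≤ S → 0 < d k)
    (D : Matrix (Fin S) (Fin S) ℝ)
    (hD : D = Matrix.diagonal (fun i : Fin S => d ((i : ℕ) + 1)))
    (alpha : Fin S → ℝ → ℝ)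
    (halpha : ∀ k t, alpha k t =
      (∑ j ∈ (Finset.range (S + 1)).erase ((k : ℕ) + 1), q ((k : ℕ) + 1) j t) -
        ∑ i ∈ (Finset.Icc 1 S).erase ((k : ℕ) + 1),
          d i / d ((k : ℕ) + 1) * q ((k : ℕ) + 1) i t)
    (blow : ℝ → ℝ) (hblow : ∀ t, blow t = ⨆ k, alpha k t)
    (z₁ z₂ : ℝ → Fin S → ℝ)
    (hz₁ : ∀ t ∈ Ici (0 : ℝ), ∀ i, HasDerivWithinAt (fun s => z₁ s i)
      ((absB S q t).mulVec (z₁ t) i) (Ici 0) t)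
    (hz₂ : ∀ t ∈ Ici (0 : ℝ), ∀ i, HasDerivWithinAt (fun s => z₂ s i)
      ((absB S q t).mulVec (z₂ t) i) (Ici 0) t)
    (hinit : ∀ i, 0 ≤ z₁ 0 i - z₂ 0 i) :
    ∀ t ∈ Ici (0 : ℝ),
      Real.exp (-∫ τ in (0 : ℝ)..t, blow τ) * ∑ i, |D.mulVec (z₁ 0 - z₂ 0) i| ≤
        ∑ i, |D.mulVec (z₁ t - z₂ t) i| := by
  have hne : Nonempty (Fin S) := ⟨⟨0, hS⟩⟩
  set w : ℝ → Fin S → ℝ := fun t i => z₁ t i - z₂ t i with hw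
  -- derivative of w
  have hw' : ∀ t ∈ Ici (0:ℝ), ∀ i, HasDerivWithinAt (fun s => w s i)
      ((absB S q t).mulVec (w t) i) (Ici 0) t := by
    intro t ht i
    have h := (hz₁ t ht i).sub (hz₂ t ht i)
    have heq : (absB S q t).mulVec (z₁ t) i - (absB S q t).mulVec (z₂ t) i
        = (absB S q t).mulVec (w t) i := by
      simp only [Matrix.mulVec, dotProduct, hw, ← Finset.sum_sub_distrib, mul_sub]
    rw [← heq]
    exact h
  -- continuity of matrix entries
  have hBc : ∀ i j : Fin S, ContinuousOn (fun t => absB S q t i j) (Ici 0) := by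
    intro i j
    by_cases h : i = j
    · subst h
      simp only [absB, if_true]
      apply ContinuousOn.neg
      apply continuousOn_finset_sum
      intro k hk
      have hk1 : k ≤ S := by
        have := Finset.mem_of_mem_erase hk
        simp only [Finset.mem_range] at this
        omega
      have hk2 : ((i:ℕ)+1) ≠ k := (Finset.ne_of_mem_erase hk).symm
      exact (hq ((i:ℕ)+1) k i.isLt hk1 hk2).1
    · simp only [absB, if_neg h]
      have hij : ((j:ℕ)+1) ≠ ((i:ℕ)+1) := by
        simp only [ne_eq, add_left_inj]
        exact fun hc => h (Fin.ext hc).symm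
      exact (hq ((j:ℕ)+1) ((i:ℕ)+1) j.isLt i.isLt hij).1
  -- nonnegativity of off-diagonal entries
  have hBoff : ∀ t ∈ Ici (0:ℝ), ∀ i j : Fin S, i ≠ j → 0 ≤ absB S q t i j := by
    intro t ht i j hij
    simp only [absB, if_neg hij]
    have h : ((j:ℕ)+1) ≠ ((i:ℕ)+1) := by
      simp only [ne_eq, add_left_inj]
      exact fun hc => hij (Fin.ext hc).symm
    exact (hq ((j:ℕ)+1) ((i:ℕ)+1) j.isLt i.isLt h).2 t ht
  -- key column identity
  have hcol : ∀ (t : ℝ) (k : Fin S),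
      ∑ i : Fin S, d ((i : ℕ) + 1) * absB S q t i k = -(d ((k : ℕ) + 1) * alpha k t) := by
    intro t k
    have hk1 : (k : ℕ) + 1 ∈ Finset.Icc 1 S := by
      simp [Nat.succ_le_iff, k.isLt]
    have hdk : d ((k : ℕ) + 1) ≠ 0 := ne_of_gt (hd _ (Nat.le_add_left _ _) k.isLt)
    rw [← Finset.add_sum_erase _ _ (Finset.mem_univ k)]
    have hdiag : absB S q t k k =
        -∑ j ∈ (Finset.range (S + 1)).erase ((k : ℕ) + 1), q ((k : ℕ) + 1) j t := by
      simp [absB]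
    have hoffsum : ∑ i ∈ Finset.univ.erase k, d ((i : ℕ) + 1) * absB S q t i k
        = ∑ m ∈ (Finset.Icc 1 S).erase ((k : ℕ) + 1), d m * q ((k : ℕ) + 1) m t := by
      have h1 : ∀ i ∈ Finset.univ.erase k,
          d ((i : ℕ) + 1) * absB S q t i k
            = d ((i : ℕ) + 1) * q ((k : ℕ) + 1) ((i : ℕ) + 1) t := by
        intro i hi
        have : i ≠ k := Finset.ne_of_mem_erase hi
        simp [absB, this]
      rw [Finset.sum_congr rfl h1]
      rw [Finset.sum_erase_eq_sub (Finset.mem_univ k), Finset.sum_erase_eq_sub hk1]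
      rw [sum_Icc_eq_fin' S (fun m => d m * q ((k : ℕ) + 1) m t)]
    rw [hoffsum, hdiag, halpha]
    have h2 : ∀ m ∈ (Finset.Icc 1 S).erase ((k : ℕ) + 1),
        d ((k : ℕ) + 1) * (d m / d ((k : ℕ) + 1) * q ((k : ℕ) + 1) m t)
          = d m * q ((k : ℕ) + 1) m t := by
      intro m _
      field_simp
    have h3 : d ((k : ℕ) + 1) * ∑ m ∈ (Finset.Icc 1 S).erase ((k : ℕ) + 1),
        d m / d ((k : ℕ) + 1) * q ((k : ℕ) + 1) m t
          = ∑ m ∈ (Finset.Icc 1 S).erase ((k : ℕ) + 1), d m * q ((k : ℕ) + 1) m t := by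
      rw [Finset.mul_sum]
      exact Finset.sum_congr rfl h2
    rw [mul_sub, h3]
    ring
  -- v and its derivative
  set v : ℝ → ℝ := fun t => ∑ i : Fin S, d ((i:ℕ)+1) * w t i with hv
  set v' : ℝ → ℝ := fun t => ∑ k : Fin S, (-(d ((k:ℕ)+1) * alpha k t)) * w t k with hv'def
  have hv' : ∀ t ∈ Ici (0:ℝ), HasDerivWithinAt v (v' t) (Ici 0) t := by
    intro t ht
    have h : HasDerivWithinAt (fun s => ∑ i : Fin S, d ((i:ℕ)+1) * w s i)
        (∑ i : Fin S, d ((i:ℕ)+1) * (absB S q t).mulVec (w t) i) (Ici 0) t :=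
      HasDerivWithinAt.fun_sum fun i _ => (hw' t ht i).const_mul _
    have heq : (∑ i : Fin S, d ((i:ℕ)+1) * (absB S q t).mulVec (w t) i) = v' t := by
      rw [hv'def]
      calc ∑ i : Fin S, d ((i:ℕ)+1) * (absB S q t).mulVec (w t) i
          = ∑ i : Fin S, ∑ k : Fin S, d ((i:ℕ)+1) * (absB S q t i k * w t k) := by
            apply Finset.sum_congr rfl
            intro i _
            rw [Matrix.mulVec, dotProduct, Finset.mul_sum]
      _ = ∑ k : Fin S, (∑ i : Fin S, d ((i:ℕ)+1) * absB S q t i k) * w t k := by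
            rw [Finset.sum_comm]
            apply Finset.sum_congr rfl
            intro k _
            rw [Finset.sum_mul]
            apply Finset.sum_congr rfl
            intro i _
            ring
      _ = ∑ k : Fin S, (-(d ((k:ℕ)+1) * alpha k t)) * w t k := by
            apply Finset.sum_congr rfl
            intro k _
            rw [hcol t k]
    rw [← heq]
    exact h
  -- alpha ≤ blow
  have halb : ∀ (k : Fin S) (t : ℝ), alpha k t ≤ blow t := by
    intro k t
    rw [hblow]
    exact le_ciSup (Set.Finite.bddAbove (Set.finite_range (fun k : Fin S => alpha k t))) k
  -- continuity of blow on Ici 0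
  have halc : ∀ k : Fin S, ContinuousOn (alpha k) (Ici 0) := by
    intro k
    have : alpha k = fun t =>
        (∑ j ∈ (Finset.range (S + 1)).erase ((k : ℕ) + 1), q ((k : ℕ) + 1) j t) -
        ∑ i ∈ (Finset.Icc 1 S).erase ((k : ℕ) + 1),
          d i / d ((k : ℕ) + 1) * q ((k : ℕ) + 1) i t := funext fun t => halpha k t
    rw [this]
    apply ContinuousOn.sub
    · apply continuousOn_finset_sum
      intro j hj
      have hj1 : j ≤ S := by
        have := Finset.mem_of_mem_erase hj
        simp only [Finset.mem_range] at this
        omega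
      exact (hq _ j k.isLt hj1 (Finset.ne_of_mem_erase hj).symm).1
    · apply continuousOn_finset_sum
      intro i hi
      have hi1 : i ≤ S := (Finset.mem_Icc.1 (Finset.mem_of_mem_erase hi)).2
      exact continuousOn_const.mul (hq _ i k.isLt hi1 (Finset.ne_of_mem_erase hi).symm).1
  have hblowc : ContinuousOn blow (Ici 0) := by
    have hb : blow = fun t => Finset.univ.sup' Finset.univ_nonempty (fun k => alpha k t) := by
      funext t
      rw [hblow, Finset.sup'_univ_eq_ciSup]
    rw [hb]
    exact ContinuousOn.finset_sup'_apply _ (fun k _ => halc k)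
  -- extended beta
  set βe : ℝ → ℝ := fun t => blow (max t 0) with hβe
  have hβec : Continuous βe := by
    apply hblowc.comp_continuous (continuous_id.max continuous_const)
    intro x
    exact le_max_right x 0
  set F : ℝ → ℝ := fun s => ∫ τ in (0:ℝ)..s, βe τ with hF
  have hFd : ∀ s : ℝ, HasDerivAt F (βe s) s := by
    intro s
    exact intervalIntegral.integral_hasDerivAt_right
      (hβec.intervalIntegrable _ _)
      (hβec.stronglyMeasurableAtFilter _ _)
      hβec.continuousAt
  -- main argument for fixed T
  intro T hT
  have hTIcc : (0:ℝ) ∈ Icc (0:ℝ) T := ⟨le_refl _, hT⟩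
  have hTmem : T ∈ Icc (0:ℝ) T := ⟨hT, le_refl _⟩
  -- positivity of w on [0, T]
  have hpos : ∀ t ∈ Icc (0:ℝ) T, ∀ i, 0 ≤ w t i := by
    apply pos_preserved' (absB S q) T hBc
      (fun t ht i j hij => hBoff t ht.1 i j hij) w hw'
    intro i
    exact hinit i
  -- derivative inequality
  have hineq : ∀ t ∈ Icc (0:ℝ) T, -blow t * v t ≤ v' t := by
    intro t ht
    have hrw : -blow t * v t = ∑ k : Fin S, (-(d ((k:ℕ)+1) * blow t)) * w t k := by
      simp only [hv]
      rw [Finset.mul_sum]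
      exact Finset.sum_congr rfl fun k _ => by ring
    rw [hrw, hv'def]
    apply Finset.sum_le_sum
    intro k _
    have h1 : 0 ≤ w t k := hpos t ht k
    have h2 : 0 < d ((k:ℕ)+1) := hd _ (Nat.le_add_left _ _) k.isLt
    have h3 : alpha k t ≤ blow t := halb k t
    have h4 : 0 ≤ d ((k:ℕ)+1) * w t k * (blow t - alpha k t) :=
      mul_nonneg (mul_nonneg h2.le h1) (sub_nonneg.2 h3)
    nlinarith [h4]
  -- monotone auxiliary function
  set g : ℝ → ℝ := fun s => Real.exp (F s) * v s with hg
  have hg' : ∀ s ∈ Ici (0:ℝ), HasDerivWithinAt g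
      (Real.exp (F s) * βe s * v s + Real.exp (F s) * v' s) (Ici 0) s := by
    intro s hs
    have h1 := ((hFd s).hasDerivWithinAt.exp.fun_mul (hv' s hs))
    convert h1 using 1
    try ring
  set G : ℝ → ℝ := fun s => Real.exp (F s) * βe s * v s + Real.exp (F s) * v' s with hG
  have hmono : MonotoneOn g (Icc 0 T) := by
    apply monotoneOn_of_hasDerivWithinAt_nonneg (f' := G) (convex_Icc 0 T)
    · intro s hs
      exact ((hg' s hs.1).continuousWithinAt).mono Icc_subset_Ici_self
    · intro x hx
      rw [interior_Icc] at hx ⊢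
      exact (hg' x (le_of_lt hx.1)).mono (fun z hz => le_of_lt hz.1)
    · intro x hx
      rw [interior_Icc] at hx
      have hxIcc : x ∈ Icc (0:ℝ) T := Ioo_subset_Icc_self hx
      have hβeq : βe x = blow x := by
        simp only [hβe]
        rw [max_eq_left (le_of_lt hx.1)]
      have h5 : 0 ≤ blow x * v x + v' x := by linarith [hineq x hxIcc]
      have : (0:ℝ) ≤ Real.exp (F x) * (blow x * v x + v' x) :=
        mul_nonneg (Real.exp_pos _).le h5
      simp only [hG, hβeq]
      nlinarith [this]
  have hg0 : g 0 = v 0 := by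
    simp [hg, hF, intervalIntegral.integral_same]
  have hgT : g 0 ≤ g T := hmono hTIcc hTmem hT
  have hFT : F T = ∫ τ in (0:ℝ)..T, blow τ := by
    apply intervalIntegral.integral_congr
    intro s hs
    rw [uIcc_of_le hT] at hs
    show blow (max s 0) = blow s
    rw [max_eq_left hs.1]
  have habs0 : (∑ i, |D.mulVec (z₁ 0 - z₂ 0) i|) = v 0 := by
    rw [hD, hv]
    apply Finset.sum_congr rfl
    intro i _
    rw [Matrix.mulVec_diagonal]
    have hwi : (z₁ 0 - z₂ 0) i = w 0 i := rfl
    rw [hwi]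
    exact abs_of_nonneg (mul_nonneg (hd _ (Nat.le_add_left _ _) i.isLt).le (hinit i))
  have habsT : v T ≤ ∑ i, |D.mulVec (z₁ T - z₂ T) i| := by
    rw [hD, hv]
    apply Finset.sum_le_sum
    intro i _
    rw [Matrix.mulVec_diagonal]
    have hwi : (z₁ T - z₂ T) i = w T i := rfl
    rw [hwi]
    exact le_abs_self _
  rw [habs0, ← hFT]
  have h6 : v 0 ≤ Real.exp (F T) * v T := by
    rw [← hg0]
    exact hgT
  calc Real.exp (-F T) * v 0 ≤ Real.exp (-F T) * (Real.exp (F T) * v T) :=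
    mul_le_mul_of_nonneg_left h6 (Real.exp_pos _).le
  _ = v T := by rw [← mul_assoc, ← Real.exp_add]; simp
  _ ≤ _ := habsT
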